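/- Let s : ℝ³ → ℝ be integrable with support contained in the closed ball of radius ρ > 0 centered at the origin, and let R ∈ ℝ³ with ‖R‖ > ρ. Then |∫ s(x)/‖R−x‖ dx − (1/‖R‖)·∫ s(x) dx| ≤ (ρ/(‖R‖·(‖R‖−ρ))) · ∫ |s(x)| dx. -/
import Mathlib


open MeasureTheory

/-- Quantitative far-field expansion: the leading term of `∫ s(x)/‖R−x‖ dx` in negative
powers of `‖R‖` is `(1/‖R‖)·∫ s`, with first-order remainder bound. -/
theorem stmt_10 (s : EuclideanSpace ℝ (Fin 3) → ℝ) (hs : Integrable s)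
    (ρ : ℝ) (hρ : 0 < ρ)
    (hsupp : Function.support s ⊆ Metric.closedBall (0 : EuclideanSpace ℝ (Fin 3)) ρ)
    (R : EuclideanSpace ℝ (Fin 3)) (hR : ρ < ‖R‖) :
    |(∫ x : EuclideanSpace ℝ (Fin 3), s x / ‖R - x‖)
        - (1 / ‖R‖) * ∫ x : EuclideanSpace ℝ (Fin 3), s x|
      ≤ (ρ / (‖R‖ * (‖R‖ - ρ))) * ∫ x : EuclideanSpace ℝ (Fin 3), |s x| := by
  have hRpos : (0:ℝ) < ‖R‖ := hρ.trans hR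
  have hsub : (0:ℝ) < ‖R‖ - ρ := by linarith
  set C : ℝ := ρ / (‖R‖ * (‖R‖ - ρ)) with hC
  have hCnn : 0 ≤ C := by positivity
  -- key pointwise bound
  have key : ∀ x, |s x / ‖R - x‖ - s x / ‖R‖| ≤ C * |s x| := by
    intro x
    by_cases hx : s x = 0
    · simp [hx, hCnn]
    · have hxρ : ‖x‖ ≤ ρ := by
        have := hsupp hx
        simpa using this
      have hA : ‖R‖ - ρ ≤ ‖R - x‖ := by
        have := norm_sub_norm_le R x
        linarith
      have hApos : (0:ℝ) < ‖R - x‖ := lt_of_lt_of_le hsub hA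
      have hdiff : |1 / ‖R - x‖ - 1 / ‖R‖| ≤ C := by
        have heq : 1 / ‖R - x‖ - 1 / ‖R‖ = (‖R‖ - ‖R - x‖) / (‖R - x‖ * ‖R‖) := by
          field_simp
        rw [heq, abs_div, abs_of_pos (mul_pos hApos hRpos)]
        have hnum : |‖R‖ - ‖R - x‖| ≤ ρ := by
          have h := abs_norm_sub_norm_le R (R - x)
          simp only [sub_sub_cancel] at h
          calc |‖R‖ - ‖R - x‖| ≤ ‖x‖ := h
            _ ≤ ρ := hxρ
        rw [hC]
        rw [div_le_div_iff₀ (mul_pos hApos hRpos) (by positivity)]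
        have h2 : (‖R‖ - ρ) * ‖R‖ ≤ ‖R - x‖ * ‖R‖ :=
          mul_le_mul_of_nonneg_right hA hRpos.le
        have h3 : ‖R‖ - ‖R - x‖ ≤ ρ := (le_abs_self _).trans hnum
        nlinarith [mul_pos hApos hRpos, mul_pos hsub hRpos]
      calc |s x / ‖R - x‖ - s x / ‖R‖| = |s x| * |1 / ‖R - x‖ - 1 / ‖R‖| := by
            rw [← abs_mul]; ring_nf
        _ ≤ |s x| * C := mul_le_mul_of_nonneg_left hdiff (abs_nonneg _)
        _ = C * |s x| := mul_comm _ _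
  -- integrability of x ↦ s x / ‖R - x‖
  have hmeas : AEStronglyMeasurable (fun x : EuclideanSpace ℝ (Fin 3) => s x / ‖R - x‖) volume := by
    exact (hs.aestronglyMeasurable.aemeasurable.div
      ((continuous_const.sub continuous_id).norm.aemeasurable)).aestronglyMeasurable
  have hint : Integrable (fun x : EuclideanSpace ℝ (Fin 3) => s x / ‖R - x‖) := by
    refine (hs.abs.const_mul (1 / (‖R‖ - ρ))).mono' hmeas ?_
    filter_upwards with x
    by_cases hx : s x = 0
    · simp [hx]
    · have hxρ : ‖x‖ ≤ ρ := by simpa using hsupp hx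
      have hA : ‖R‖ - ρ ≤ ‖R - x‖ := by
        have := norm_sub_norm_le R x
        linarith
      have hApos : (0:ℝ) < ‖R - x‖ := lt_of_lt_of_le hsub hA
      rw [Real.norm_eq_abs, abs_div, abs_of_pos hApos]
      rw [div_le_iff₀ hApos]
      calc |s x| = (1 / (‖R‖ - ρ)) * |s x| * (‖R‖ - ρ) := by field_simp
        _ ≤ (1 / (‖R‖ - ρ)) * |s x| * ‖R - x‖ := by
            apply mul_le_mul_of_nonneg_left hA; positivity
  have hint2 : Integrable (fun x : EuclideanSpace ℝ (Fin 3) => s x / ‖R‖) := hs.div_const _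
  have hEq : (∫ x : EuclideanSpace ℝ (Fin 3), s x / ‖R - x‖)
        - (1 / ‖R‖) * ∫ x : EuclideanSpace ℝ (Fin 3), s x
      = ∫ x : EuclideanSpace ℝ (Fin 3), (s x / ‖R - x‖ - s x / ‖R‖) := by
    rw [integral_sub hint hint2, integral_div]
    ring
  rw [hEq]
  calc |∫ x : EuclideanSpace ℝ (Fin 3), (s x / ‖R - x‖ - s x / ‖R‖)|
      ≤ ∫ x : EuclideanSpace ℝ (Fin 3), |s x / ‖R - x‖ - s x / ‖R‖| := by
        simpa using norm_integral_le_integral_norm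
          (fun x : EuclideanSpace ℝ (Fin 3) => s x / ‖R - x‖ - s x / ‖R‖)
    _ ≤ ∫ x : EuclideanSpace ℝ (Fin 3), C * |s x| := by
        refine integral_mono (hint.sub hint2).abs (hs.abs.const_mul C) ?_
        intro x; exact key x
    _ = C * ∫ x : EuclideanSpace ℝ (Fin 3), |s x| := integral_const_mul _ _
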